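/- The space of derivations of J, i.e., the linear subspace {d ∈ End_ℂ(J) : d(x∘y) = d(x)∘y + x∘d(y) for all x, y ∈ J} of the endomorphism algebra of J, has dimension k² − k = (m+1)·m over ℂ. -/

import Mathlib

/-- The "marginal" Jordan algebra `J = ℂ × (Fin m → ℂ)` with multiplication
`(a,v)∘(b,w) = (a·b, (1/2)·(a·w + b·v))`; i.e. with basis `e, n_1, …, n_m`,
`e∘e = e`, `e∘n_i = (1/2)n_i`, `n_i∘n_j = 0`, where `e = (1,0)`. -/
noncomputable def jmul (m : ℕ) (x y : ℂ × (Fin m → ℂ)) : ℂ × (Fin m → ℂ) :=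
  (x.1 * y.1, (1 / 2 : ℂ) • (x.1 • y.2 + y.1 • x.2))

lemma jmul_eq_smul (m : ℕ) (x y : ℂ × (Fin m → ℂ)) :
    jmul m x y = ((1/2 : ℂ) * y.1) • x + ((1/2 : ℂ) * x.1) • y := by
  simp only [jmul, Prod.ext_iff, Prod.smul_fst, Prod.smul_snd, Prod.fst_add, Prod.snd_add,
    smul_eq_mul]
  constructor
  · ring
  · funext i
    simp [Pi.smul_apply, smul_eq_mul]
    ring

/-- The space of derivations of `J` has dimension `k² - k = (m+1)·m` over `ℂ`. -/
theorem finrank_derivations (m : ℕ) (hm : 1 ≤ m)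
    (D : Submodule ℂ ((ℂ × (Fin m → ℂ)) →ₗ[ℂ] (ℂ × (Fin m → ℂ))))
    (hD : ∀ d, d ∈ D ↔
      ∀ x y : ℂ × (Fin m → ℂ), d (jmul m x y) = jmul m (d x) y + jmul m x (d y)) :
    Module.finrank ℂ D = (m + 1) * m := by
  classical
  let φ : ((ℂ × (Fin m → ℂ)) →ₗ[ℂ] (ℂ × (Fin m → ℂ))) →ₗ[ℂ] ((ℂ × (Fin m → ℂ)) →ₗ[ℂ] ℂ) :=
    LinearMap.llcomp ℂ _ _ ℂ (LinearMap.fst ℂ ℂ (Fin m → ℂ))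
  have hφ : ∀ d : (ℂ × (Fin m → ℂ)) →ₗ[ℂ] (ℂ × (Fin m → ℂ)), ∀ x, φ d x = (d x).1 := fun d x => rfl
  have hDker : D = LinearMap.ker φ := by
    ext d
    rw [hD, LinearMap.mem_ker]
    constructor
    · intro h
      refine LinearMap.ext fun x => ?_
      show (d x).1 = 0
      set e : ℂ × (Fin m → ℂ) := ((1 : ℂ), (0 : Fin m → ℂ)) with he
      have hee : jmul m e e = e := by
        simp [jmul, he, Prod.ext_iff]
      have h1 := h e e
      rw [hee] at h1
      have h1' := congrArg Prod.fst h1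
      simp only [jmul, Prod.fst_add] at h1'
      have hde : (d e).1 = 0 := by
        simp only [he] at h1'
        linear_combination -h1'
      have h2 := h x e
      have hxe : jmul m x e = (1/2 : ℂ) • x + ((1/2 : ℂ) * x.1) • e := by
        rw [jmul_eq_smul]
        simp [he]
      rw [hxe, map_add, map_smul, map_smul] at h2
      have h2' := congrArg Prod.fst h2
      simp only [jmul, Prod.fst_add, Prod.smul_fst, smul_eq_mul, he, hde] at h2'
      have hde' : (d (1, 0)).1 = 0 := hde
      linear_combination -2 * h2' - x.1 * hde'
    · intro h x y
      have h0 : ∀ z : ℂ × (Fin m → ℂ), (d z).1 = 0 := by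
        intro z
        have := congrArg (fun g => g z) h
        simpa [hφ] using this
      rw [jmul_eq_smul, map_add, map_smul, map_smul,
        jmul_eq_smul m (d x) y, jmul_eq_smul m x (d y), h0 x, h0 y]
      module
  rw [hDker]
  have hsurj : Function.Surjective φ := by
    intro g
    refine ⟨(LinearMap.inl ℂ ℂ (Fin m → ℂ)).comp g, LinearMap.ext fun x => ?_⟩
    simp [hφ]
  have hrange : LinearMap.range φ = ⊤ := LinearMap.range_eq_top.mpr hsurj
  have hrn := LinearMap.finrank_range_add_finrank_ker φ
  rw [hrange, finrank_top] at hrn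
  have h1 : Module.finrank ℂ ((ℂ × (Fin m → ℂ)) →ₗ[ℂ] ℂ) = m + 1 := by
    simp [Module.finrank_linearMap, add_comm]
  have h2 : Module.finrank ℂ ((ℂ × (Fin m → ℂ)) →ₗ[ℂ] (ℂ × (Fin m → ℂ))) = (m + 1) * (m + 1) := by
    simp [Module.finrank_linearMap, add_comm]
  rw [h1, h2] at hrn
  have h3 : (m + 1) * (m + 1) = (m + 1) + (m + 1) * m := by ring
  omega
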